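/- Let m, M be positive integers, let f_1, …, f_M ∈ ℝ^{2^m} and r_1, …, r_M ∈ ℝ, and define L : ℝ^m → ℝ by L(θ) = (1/(2M)) · Σ_{t=1}^M ( w(θ)·f_t − r_t )². Then for all j, k ∈ {1, …, m}, the second-order partial derivative ∂²L/∂θ_j∂θ_k at θ equals (1/M)·Σ_{t=1}^M ( w(θ)·f_t − r_t )·( w(θ + (π/2)(e_j + e_k))·f_t ) + (1/M)·Σ_{t=1}^M ( w(θ + (π/2)e_j)·f_t )·( w(θ + (π/2)e_k)·f_t ), where e_j denotes the j-th standard basis vector of ℝ^m. -/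

import Mathlib

set_option maxHeartbeats 1000000


open Real Finset Matrix

/-- The weight vector `w(θ) ∈ ℝ^{2^m}` of the quantum RBF network, defined as the
Kronecker product `⊗_{j=1}^m (cos θ_j, sin θ_j)`, indexed by `t` via its binary digits. -/
noncomputable def weight (m : ℕ) (θ : Fin m → ℝ) : Fin (2 ^ m) → ℝ := fun t =>
  ∏ j : Fin m, if (t : ℕ) / 2 ^ (j : ℕ) % 2 = 0 then Real.cos (θ j) else Real.sin (θ j)

/-- The loss function `L(θ) = (1/(2M))·Σ_{t=1}^M (w(θ)·f_t − r_t)²`. -/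
noncomputable def loss (m M : ℕ) (f : Fin M → Fin (2 ^ m) → ℝ) (r : Fin M → ℝ)
    (θ : Fin m → ℝ) : ℝ :=
  (1 / (2 * (M : ℝ))) * ∑ t : Fin M, (weight m θ ⬝ᵥ f t - r t) ^ 2


noncomputable def Fent (m : ℕ) (t : Fin (2 ^ m)) (i : Fin m) (x : ℝ) : ℝ :=
  if (t : ℕ) / 2 ^ (i : ℕ) % 2 = 0 then Real.cos x else Real.sin x

lemma weight_eq (m : ℕ) (t : Fin (2 ^ m)) (θ : Fin m → ℝ) :
    weight m θ t = ∏ i : Fin m, Fent m t i (θ i) := rfl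

lemma Fent_hasDerivAt (m : ℕ) (t : Fin (2 ^ m)) (i : Fin m) (x : ℝ) :
    HasDerivAt (Fent m t i) (Fent m t i (x + π / 2)) x := by
  unfold Fent
  by_cases h : (t : ℕ) / 2 ^ (i : ℕ) % 2 = 0 <;>
    simp only [h, if_true, if_false, Real.cos_add_pi_div_two, Real.sin_add_pi_div_two]
  · exact Real.hasDerivAt_cos x
  · exact Real.hasDerivAt_sin x

noncomputable def Dw (m : ℕ) (v : Fin (2 ^ m) → ℝ) (θ : Fin m → ℝ) : (Fin m → ℝ) →L[ℝ] ℝ :=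
  ∑ i : Fin m, (weight m (θ + Pi.single i (π / 2)) ⬝ᵥ v) •
    (ContinuousLinearMap.proj i : (Fin m → ℝ) →L[ℝ] ℝ)

lemma Dw_apply {m : ℕ} (v : Fin (2 ^ m) → ℝ) (θ : Fin m → ℝ) (j : Fin m) :
    Dw m v θ (Pi.single j 1) = weight m (θ + Pi.single j (π / 2)) ⬝ᵥ v := by
  simp [Dw, ContinuousLinearMap.proj_apply, Pi.single_apply, mul_ite, Finset.sum_ite_eq]

lemma weight_shift {m : ℕ} (t : Fin (2 ^ m)) (θ : Fin m → ℝ) (i : Fin m) :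
    weight m (θ + Pi.single i (π / 2)) t =
      (∏ l ∈ Finset.univ.erase i, Fent m t l (θ l)) * Fent m t i (θ i + π / 2) := by
  rw [weight_eq, ← Finset.prod_erase_mul _ _ (Finset.mem_univ i)]
  congr 1
  · refine Finset.prod_congr rfl fun l hl => ?_
    have hne : l ≠ i := Finset.ne_of_mem_erase hl
    simp [Pi.single_apply, hne]
  · simp [Pi.single_apply]

lemma hasFDerivAt_weight_entry {m : ℕ} (t : Fin (2 ^ m)) (θ : Fin m → ℝ) :
    HasFDerivAt (fun θ' => weight m θ' t)
      (∑ i : Fin m, weight m (θ + Pi.single i (π / 2)) t •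
        (ContinuousLinearMap.proj i : (Fin m → ℝ) →L[ℝ] ℝ)) θ := by
  have hfac : ∀ i : Fin m, HasFDerivAt (fun θ' : Fin m → ℝ => Fent m t i (θ' i))
      (Fent m t i (θ i + π / 2) • (ContinuousLinearMap.proj i : (Fin m → ℝ) →L[ℝ] ℝ)) θ :=
    fun i => by
      have hc := (Fent_hasDerivAt m t i (θ i)).comp_hasFDerivAt θ
        (hasFDerivAt_apply (𝕜 := ℝ) (F' := fun _ : Fin m => ℝ) i θ)
      exact hc
  have h := HasFDerivAt.finset_prod (u := Finset.univ) (fun i _ => hfac i)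
  have hfn : (∏ i ∈ Finset.univ, (fun θ' : Fin m → ℝ => Fent m t i (θ' i)) ·) =
      fun θ' => weight m θ' t := by
    funext θ'
    rw [weight_eq]
  rw [hfn] at h
  refine h.congr_fderiv (Eq.symm ?_)
  refine Finset.sum_congr rfl fun i _ => ?_
  rw [weight_shift, smul_smul]

lemma hasFDerivAt_dot {m : ℕ} (v : Fin (2 ^ m) → ℝ) (θ : Fin m → ℝ) :
    HasFDerivAt (fun θ' => weight m θ' ⬝ᵥ v) (Dw m v θ) θ := by
  have h := HasFDerivAt.fun_sum (u := Finset.univ)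
    (fun s (_ : s ∈ Finset.univ) => (hasFDerivAt_weight_entry s θ).mul_const (v s))
  have hfn : (fun θ' : Fin m → ℝ => ∑ s : Fin (2 ^ m), weight m θ' s * v s) =
      fun θ' => weight m θ' ⬝ᵥ v := by
    funext θ'; simp [dotProduct]
  rw [hfn] at h
  refine h.congr_fderiv (Eq.symm ?_)
  rw [Dw]
  simp only [dotProduct, Finset.sum_smul]
  rw [Finset.sum_comm]
  refine Finset.sum_congr rfl fun s _ => ?_
  rw [Finset.smul_sum]
  refine Finset.sum_congr rfl fun i _ => ?_
  rw [smul_smul, mul_comm]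

lemma hasFDerivAt_dot_shift {m : ℕ} (v : Fin (2 ^ m) → ℝ) (c θ : Fin m → ℝ) :
    HasFDerivAt (fun θ' => weight m (θ' + c) ⬝ᵥ v) (Dw m v (θ + c)) θ := by
  have h := (hasFDerivAt_dot v (θ + c)).comp θ ((hasFDerivAt_id θ).add_const c)
  exact h

lemma loss_hasFDerivAt {m M : ℕ} (f : Fin M → Fin (2 ^ m) → ℝ) (r : Fin M → ℝ)
    (θ : Fin m → ℝ) :
    HasFDerivAt (loss m M f r)
      ((1 / (2 * (M : ℝ))) • ∑ t : Fin M,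
        (2 * (weight m θ ⬝ᵥ f t - r t)) • Dw m (f t) θ) θ := by
  have h : ∀ t : Fin M, HasFDerivAt (fun θ' => (weight m θ' ⬝ᵥ f t - r t) ^ 2)
      ((2 * (weight m θ ⬝ᵥ f t - r t)) • Dw m (f t) θ) θ := by
    intro t
    have hd := (hasFDerivAt_dot (f t) θ).sub_const (r t)
    have h2 : (2 * (weight m θ ⬝ᵥ f t - r t)) • Dw m (f t) θ =
        (weight m θ ⬝ᵥ f t - r t) • Dw m (f t) θ +
        (weight m θ ⬝ᵥ f t - r t) • Dw m (f t) θ := by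
      rw [two_mul, add_smul]
    rw [h2]
    simp only [pow_two]
    exact hd.mul hd
  have h2 := (HasFDerivAt.fun_sum (u := Finset.univ) (fun t (_ : t ∈ Finset.univ) => h t)).const_mul
    (1 / (2 * (M : ℝ)))
  exact h2

lemma fderiv_loss_apply {m M : ℕ} (hM : 0 < M) (f : Fin M → Fin (2 ^ m) → ℝ)
    (r : Fin M → ℝ) (θ' : Fin m → ℝ) (k : Fin m) :
    fderiv ℝ (loss m M f r) θ' (Pi.single k 1) =
      (1 / (M : ℝ)) * ∑ t : Fin M, (weight m θ' ⬝ᵥ f t - r t) *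
        (weight m (θ' + Pi.single k (π / 2)) ⬝ᵥ f t) := by
  rw [(loss_hasFDerivAt f r θ').fderiv]
  simp only [ContinuousLinearMap.smul_apply, ContinuousLinearMap.sum_apply, Dw_apply,
    smul_eq_mul]
  rw [Finset.mul_sum, Finset.mul_sum]
  refine Finset.sum_congr rfl fun t _ => ?_
  have hM' : (M : ℝ) ≠ 0 := Nat.cast_ne_zero.mpr hM.ne'
  field_simp


/-- The second-order partial derivative `∂²L/∂θ_j∂θ_k` of the loss at `θ` equals
`(1/M)·Σ_t (w(θ)·f_t − r_t)·(w(θ + (π/2)(e_j + e_k))·f_t)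
  + (1/M)·Σ_t (w(θ + (π/2)e_j)·f_t)·(w(θ + (π/2)e_k)·f_t)`. -/
theorem loss_second_deriv (m M : ℕ) (hm : 0 < m) (hM : 0 < M)
    (f : Fin M → Fin (2 ^ m) → ℝ) (r : Fin M → ℝ) (θ : Fin m → ℝ) (j k : Fin m) :
    fderiv ℝ (fun θ' => fderiv ℝ (loss m M f r) θ' (Pi.single k 1)) θ (Pi.single j 1) =
      (1 / (M : ℝ)) * ∑ t : Fin M, (weight m θ ⬝ᵥ f t - r t) *
          (weight m (θ + Pi.single j (π / 2) + Pi.single k (π / 2)) ⬝ᵥ f t) +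
      (1 / (M : ℝ)) * ∑ t : Fin M, (weight m (θ + Pi.single j (π / 2)) ⬝ᵥ f t) *
          (weight m (θ + Pi.single k (π / 2)) ⬝ᵥ f t) := by
  have hfun : (fun θ' => fderiv ℝ (loss m M f r) θ' (Pi.single k 1)) =
      fun θ' => (1 / (M : ℝ)) * ∑ t : Fin M, (weight m θ' ⬝ᵥ f t - r t) *
        (weight m (θ' + Pi.single k (π / 2)) ⬝ᵥ f t) :=
    funext fun θ' => fderiv_loss_apply hM f r θ' k
  rw [hfun]
  have H : HasFDerivAt (fun θ' => (1 / (M : ℝ)) * ∑ t : Fin M, (weight m θ' ⬝ᵥ f t - r t) *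
        (weight m (θ' + Pi.single k (π / 2)) ⬝ᵥ f t))
      ((1 / (M : ℝ)) • ∑ t : Fin M,
        ((weight m θ ⬝ᵥ f t - r t) • Dw m (f t) (θ + Pi.single k (π / 2)) +
          (weight m (θ + Pi.single k (π / 2)) ⬝ᵥ f t) • Dw m (f t) θ)) θ := by
    refine HasFDerivAt.const_mul (HasFDerivAt.fun_sum fun t _ => ?_) _
    exact ((hasFDerivAt_dot (f t) θ).sub_const (r t)).mul
      (hasFDerivAt_dot_shift (f t) (Pi.single k (π / 2)) θ)
  rw [H.fderiv]
  simp only [ContinuousLinearMap.smul_apply, ContinuousLinearMap.sum_apply,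
    ContinuousLinearMap.add_apply, Dw_apply, smul_eq_mul]
  rw [Finset.sum_add_distrib, mul_add]
  refine congrArg₂ HAdd.hAdd ?_ ?_
  · exact congrArg _ (Finset.sum_congr rfl fun t _ => by
      rw [add_right_comm θ (Pi.single k (π / 2)) (Pi.single j (π / 2))])
  · exact congrArg _ (Finset.sum_congr rfl fun t _ => mul_comm _ _)
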